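/- Let A = M + Λ be a periodic point set in ℝ³. For each integer k ≥ 0 and t ≥ 0, define ψ_k^A(t) = vol(U ∩ ⋃^k A(t)) / vol(U), the fractional volume of the k-fold cover of the balls of radius t around points of A intersected with the unit cell U. Then ψ_k^A is invariant under isometries: if φ: ℝ³ → ℝ³ is an isometry and Q = φ(A), then ψ_k^Q = ψ_k^A for all k. -/

import Mathlib

open MeasureTheory Set Metric Pointwise

noncomputable section

/-- 3-dimensional Euclidean space. -/
abbrev E3 := EuclideanSpace ℝ (Fin 3)

/-- The lattice generated by the vectors `b 0, b 1, b 2`. -/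
def lat (b : Fin 3 → E3) : Set E3 := {x | ∃ n : Fin 3 → ℤ, x = ∑ i, (n i : ℝ) • b i}

/-- The unit cell spanned by the vectors `b 0, b 1, b 2`. -/
def cell (b : Fin 3 → E3) : Set E3 :=
  {x | ∃ c : Fin 3 → ℝ, (∀ i, 0 ≤ c i ∧ c i < 1) ∧ x = ∑ i, c i • b i}

/-- The `k`-fold cover: points lying in at least `k` closed balls of radius `t`
centered at points of `A`. -/
def coverGE (A : Set E3) (t : ℝ) (k : ℕ) : Set E3 :=
  {x | ∃ F : Finset E3, F.card = k ∧ ↑F ⊆ A ∧ ∀ a ∈ F, dist x a ≤ t}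

/-- Points lying in exactly `k` closed balls of radius `t` centered at points of `A`. -/
def coverEQ (A : Set E3) (t : ℝ) (k : ℕ) : Set E3 :=
  {x | ∃ F : Finset E3, ↑F = {a ∈ A | dist x a ≤ t} ∧ F.card = k}

/-- The `k`-th Dirichlet–Voronoi domain of `a` in `A` (with `D_0 = ∅`). -/
def DV (A : Set E3) (a : E3) : ℕ → Set E3
  | 0 => ∅
  | (k+1) => {x | ({b ∈ A | dist x b < dist x a}).ncard ≤ k}

/-- The `k`-th Brillouin zone of `a` in `A`. -/
def BZ (A : Set E3) (a : E3) (k : ℕ) : Set E3 := DV A a k \ DV A a (k-1)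

def theBasis (b : Fin 3 → E3) (hb : LinearIndependent ℝ b) : Module.Basis (Fin 3) ℝ E3 :=
  basisOfLinearIndependentOfCardEqFinrank hb
    (by rw [finrank_euclideanSpace_fin, Fintype.card_fin])

lemma theBasis_coe (b : Fin 3 → E3) (hb : LinearIndependent ℝ b) : ⇑(theBasis b hb) = b :=
  coe_basisOfLinearIndependentOfCardEqFinrank _ _

lemma cell_eq (b : Fin 3 → E3) (hb : LinearIndependent ℝ b) :
    cell b = ZSpan.fundamentalDomain (theBasis b hb) := by
  set B := theBasis b hb with hB
  have hsum : ∀ c : Fin 3 → ℝ, B.equivFun.symm c = ∑ i, c i • b i := by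
    intro c; rw [Module.Basis.equivFun_symm_apply]
    simp_rw [hB, theBasis_coe]
  ext x
  constructor
  · rintro ⟨c, hc, rfl⟩ i
    have h1 : B.equivFun (∑ i, c i • b i) = c := by
      rw [← hsum, LinearEquiv.apply_symm_apply]
    have h2 : B.repr (∑ i, c i • b i) i = c i := by
      rw [← Module.Basis.equivFun_apply, h1]
    rw [Set.mem_Ico, h2]
    exact hc i
  · intro hx
    refine ⟨fun i => B.repr x i, fun i => ⟨(hx i).1, (hx i).2⟩, ?_⟩
    have := hsum (fun i => B.repr x i)
    rw [← this]
    rw [← Module.Basis.equivFun_apply, LinearEquiv.symm_apply_apply]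

lemma lat_eq (b : Fin 3 → E3) (hb : LinearIndependent ℝ b) :
    lat b = ↑(Submodule.span ℤ (Set.range ⇑(theBasis b hb))) := by
  rw [theBasis_coe]
  ext x
  rw [SetLike.mem_coe, Submodule.mem_span_range_iff_exists_fun ℤ]
  constructor
  · rintro ⟨n, rfl⟩
    exact ⟨n, by simp_rw [← Int.cast_smul_eq_zsmul ℝ]⟩
  · rintro ⟨c, rfl⟩
    exact ⟨c, by simp_rw [← Int.cast_smul_eq_zsmul ℝ]⟩

lemma lat_tiling (b : Fin 3 → E3) (hb : LinearIndependent ℝ b) :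
    ∀ x : E3, ∃! v, v ∈ lat b ∧ v + x ∈ cell b := by
  intro x
  obtain ⟨v, hv, huniq⟩ := ZSpan.exist_unique_vadd_mem_fundamentalDomain (theBasis b hb) x
  have hvadd : ∀ w : Submodule.span ℤ (Set.range ⇑(theBasis b hb)),
      w +ᵥ x = (w : E3) + x := fun w => rfl
  refine ⟨(v : E3), ⟨by rw [lat_eq b hb]; exact v.2, by rw [← hvadd, cell_eq b hb]; exact hv⟩, ?_⟩
  rintro w ⟨hwΛ, hwx⟩
  rw [lat_eq b hb] at hwΛ
  have := huniq ⟨w, hwΛ⟩ (by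
    show w + x ∈ ZSpan.fundamentalDomain (theBasis b hb)
    rw [← cell_eq b hb]; exact hwx)
  exact congrArg Subtype.val this

lemma lat_sub_mem (b : Fin 3 → E3) (hb : LinearIndependent ℝ b) {u w : E3}
    (hu : u ∈ lat b) (hw : w ∈ lat b) : u - w ∈ lat b := by
  rw [lat_eq b hb] at *
  exact Submodule.sub_mem _ hu hw

lemma lat_add_mem (b : Fin 3 → E3) (hb : LinearIndependent ℝ b) {u w : E3}
    (hu : u ∈ lat b) (hw : w ∈ lat b) : u + w ∈ lat b := by
  rw [lat_eq b hb] at *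
  exact Submodule.add_mem _ hu hw

lemma lat_countable (b : Fin 3 → E3) : (lat b).Countable := by
  have : lat b = Set.range (fun n : Fin 3 → ℤ => ∑ i, ((n i : ℝ)) • b i) := by
    ext x; simp [lat, Set.mem_range, eq_comm]
  rw [this]; exact Set.countable_range _

lemma cell_measurable (b : Fin 3 → E3) (hb : LinearIndependent ℝ b) :
    MeasurableSet (cell b) := by
  rw [cell_eq b hb]; exact ZSpan.fundamentalDomain_measurableSet _

lemma cell_bounded (b : Fin 3 → E3) (hb : LinearIndependent ℝ b) :
    Bornology.IsBounded (cell b) := by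
  rw [cell_eq b hb]; exact ZSpan.fundamentalDomain_isBounded _

lemma cell_vol_ne_zero (b : Fin 3 → E3) (hb : LinearIndependent ℝ b) :
    volume (cell b) ≠ 0 := by
  rw [cell_eq b hb]; exact ZSpan.measure_fundamentalDomain_ne_zero _

lemma cell_vol_ne_top (b : Fin 3 → E3) (hb : LinearIndependent ℝ b) :
    volume (cell b) ≠ ⊤ := (cell_bounded b hb).measure_lt_top.ne

lemma A_per (M : Finset E3) (b : Fin 3 → E3) (hb : LinearIndependent ℝ b) {v : E3}
    (hv : v ∈ lat b) (a : E3) :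
    a ∈ (↑M + lat b : Set E3) ↔ v + a ∈ (↑M + lat b : Set E3) := by
  simp only [Set.mem_add]
  constructor
  · rintro ⟨m, hm, l, hl, rfl⟩
    exact ⟨m, hm, l + v, lat_add_mem b hb hl hv, by abel⟩
  · rintro ⟨m, hm, l, hl, he⟩
    refine ⟨m, hm, l - v, lat_sub_mem b hb hl hv, ?_⟩
    have : a = m + l - v := by rw [he]; abel
    rw [this]; abel

lemma A_countable (M : Finset E3) (b : Fin 3 → E3) :
    ((↑M : Set E3) + lat b).Countable := by
  rw [← Set.image2_add]
  exact Set.Countable.image2 M.countable_toSet (lat_countable b) _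



lemma sandwich (S D Λ : Set E3) (hS : MeasurableSet S) (hD : MeasurableSet D)
    (hΛ : Λ.Countable)
    (htile : ∀ x : E3, ∃! v, v ∈ Λ ∧ v + x ∈ D)
    (hper : ∀ v ∈ Λ, ∀ x : E3, x ∈ S ↔ v + x ∈ S)
    (d : ℝ) (hd : ∀ x ∈ D, ∀ y ∈ D, dist x y ≤ d) (R : ℝ) :
    volume (closedBall (0:E3) (R - d)) * volume (S ∩ D)
        ≤ volume D * volume (S ∩ closedBall 0 R) ∧
      volume D * volume (S ∩ closedBall 0 R)
        ≤ volume (closedBall (0:E3) (R + d)) * volume (S ∩ D) := by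
  set Dv : E3 → Set E3 := fun v => (fun x => v + x) ⁻¹' D with hDvdef
  have hDvmeas : ∀ v, MeasurableSet (Dv v) := fun v => hD.preimage (measurable_const_add v)
  have hDvvol : ∀ v, volume (Dv v) = volume D := fun v => measure_preimage_add volume v D
  have hSDv : ∀ v ∈ Λ, S ∩ Dv v = (fun x => v + x) ⁻¹' (S ∩ D) := by
    intro v hv; ext x
    simp only [mem_inter_iff, mem_preimage, hDvdef]
    exact and_congr_left fun _ => hper v hv x
  have hSDvvol : ∀ v ∈ Λ, volume (S ∩ Dv v) = volume (S ∩ D) := by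
    intro v hv; rw [hSDv v hv]; exact measure_preimage_add volume v _
  have hdisj : Λ.PairwiseDisjoint Dv := by
    intro v hv w hw hvw
    refine Set.disjoint_left.2 fun x hxv hxw => hvw ?_
    obtain ⟨u, _, huniq⟩ := htile x
    rw [huniq v ⟨hv, hxv⟩, huniq w ⟨hw, hxw⟩]
  constructor
  · set T : Set E3 := {v ∈ Λ | Dv v ⊆ closedBall 0 R} with hT
    have hTsub : T ⊆ Λ := fun v hv => hv.1
    have hTc : T.Countable := hΛ.mono hTsub
    have hcover : closedBall (0:E3) (R - d) ⊆ ⋃ v ∈ T, Dv v := by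
      intro x hx
      obtain ⟨v, ⟨hvΛ, hvx⟩, -⟩ := htile x
      have hsub : Dv v ⊆ closedBall 0 R := by
        intro y hy
        have h1 : dist y x = dist (v + y) (v + x) := (dist_add_left v y x).symm
        have h2 : dist (v + y) (v + x) ≤ d := hd _ hy _ hvx
        have h3 : dist x 0 ≤ R - d := mem_closedBall.1 hx
        have : dist y 0 ≤ R := by
          calc dist y 0 ≤ dist y x + dist x 0 := dist_triangle _ _ _
            _ ≤ d + (R - d) := by rw [h1]; exact add_le_add h2 h3
            _ = R := by ring
        exact mem_closedBall.2 this
      exact mem_biUnion ⟨hvΛ, hsub⟩ hvx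
    calc volume (closedBall (0:E3) (R-d)) * volume (S ∩ D)
        ≤ volume (⋃ v ∈ T, Dv v) * volume (S ∩ D) :=
          mul_le_mul_left (measure_mono hcover) _
      _ = (∑' v : T, volume (Dv ↑v)) * volume (S ∩ D) := by
          rw [measure_biUnion hTc (hdisj.subset hTsub) (fun v _ => hDvmeas v)]
      _ = ∑' v : T, (volume (Dv ↑v) * volume (S ∩ D)) := ENNReal.tsum_mul_right.symm
      _ = ∑' v : T, (volume D * volume (S ∩ Dv ↑v)) := by
          refine tsum_congr fun v => ?_
          rw [hDvvol, hSDvvol ↑v (hTsub v.2), mul_comm]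
      _ = volume D * ∑' v : T, volume (S ∩ Dv ↑v) := ENNReal.tsum_mul_left
      _ = volume D * volume (⋃ v ∈ T, S ∩ Dv v) := by
          rw [measure_biUnion hTc
            ((hdisj.subset hTsub).mono fun v => inter_subset_right)
            (fun v _ => hS.inter (hDvmeas v))]
      _ ≤ volume D * volume (S ∩ closedBall 0 R) := by
          refine mul_le_mul_right (measure_mono ?_) _
          exact iUnion₂_subset fun v hv => inter_subset_inter_right S hv.2
  · set T : Set E3 := {v ∈ Λ | (Dv v ∩ closedBall 0 R).Nonempty} with hT
    have hTsub : T ⊆ Λ := fun v hv => hv.1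
    have hTc : T.Countable := hΛ.mono hTsub
    have hcover : S ∩ closedBall (0:E3) R ⊆ ⋃ v ∈ T, (S ∩ Dv v) := by
      rintro x ⟨hxS, hxB⟩
      obtain ⟨v, ⟨hvΛ, hvx⟩, -⟩ := htile x
      exact mem_biUnion ⟨hvΛ, ⟨x, hvx, hxB⟩⟩ ⟨hxS, hvx⟩
    have hsub : ∀ v ∈ T, Dv v ⊆ closedBall (0:E3) (R + d) := by
      rintro v ⟨hvΛ, z, hzD, hzB⟩ y hy
      have h1 : dist y z = dist (v + y) (v + z) := (dist_add_left v y z).symm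
      have h2 : dist (v + y) (v + z) ≤ d := hd _ hy _ hzD
      have : dist y 0 ≤ R + d := by
        calc dist y 0 ≤ dist y z + dist z 0 := dist_triangle _ _ _
          _ ≤ d + R := by rw [h1]; exact add_le_add h2 (mem_closedBall.1 hzB)
          _ = R + d := by ring
      exact mem_closedBall.2 this
    calc volume D * volume (S ∩ closedBall (0:E3) R)
        ≤ volume D * volume (⋃ v ∈ T, (S ∩ Dv v)) :=
          mul_le_mul_right (measure_mono hcover) _
      _ = volume D * ∑' v : T, volume (S ∩ Dv ↑v) := by
          rw [measure_biUnion hTc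
            ((hdisj.subset hTsub).mono fun v => inter_subset_right)
            (fun v _ => hS.inter (hDvmeas v))]
      _ = ∑' v : T, (volume D * volume (S ∩ Dv ↑v)) := ENNReal.tsum_mul_left.symm
      _ = ∑' v : T, (volume (Dv ↑v) * volume (S ∩ D)) := by
          refine tsum_congr fun v => ?_
          rw [hDvvol, hSDvvol ↑v (hTsub v.2), mul_comm]
      _ = (∑' v : T, volume (Dv ↑v)) * volume (S ∩ D) := ENNReal.tsum_mul_right
      _ = volume (⋃ v ∈ T, Dv v) * volume (S ∩ D) := by
          rw [measure_biUnion hTc (hdisj.subset hTsub) (fun v _ => hDvmeas v)]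
      _ ≤ volume (closedBall (0:E3) (R + d)) * volume (S ∩ D) := by
          refine mul_le_mul_left (measure_mono ?_) _
          exact iUnion₂_subset hsub


open Filter in
lemma key_le (a b : ENNReal) (ha : a ≠ ⊤) (hb : b ≠ ⊤) (d1 d2 : ℝ)
    (hd1 : 0 ≤ d1) (hd2 : 0 ≤ d2)
    (h : ∀ R : ℝ, d1 ≤ R →
      ENNReal.ofReal ((R - d1)^3) * a ≤ ENNReal.ofReal ((R + d2)^3) * b) :
    a ≤ b := by
  refine (ENNReal.toReal_le_toReal ha hb).1 ?_
  set a' := a.toReal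
  set b' := b.toReal
  have key : ∀ n : ℕ, 1 ≤ (n:ℝ) → d1 ≤ (n:ℝ) →
      (1 - d1/(n:ℝ))^3 * a' ≤ (1 + d2/(n:ℝ))^3 * b' := by
    intro n h1 hdn
    have hn : (0:ℝ) < n := lt_of_lt_of_le one_pos h1
    have hRd : (0:ℝ) ≤ ((n:ℝ) - d1)^3 := pow_nonneg (by linarith) _
    have hRd2 : (0:ℝ) ≤ ((n:ℝ) + d2)^3 := pow_nonneg (by linarith) _
    have h1' : ((n:ℝ) - d1)^3 * a' ≤ ((n:ℝ) + d2)^3 * b' := by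
      have h2 := ENNReal.toReal_mono
        (ENNReal.mul_ne_top ENNReal.ofReal_ne_top hb) (h n hdn)
      rwa [ENNReal.toReal_mul, ENNReal.toReal_mul, ENNReal.toReal_ofReal hRd,
        ENNReal.toReal_ofReal hRd2] at h2
    have hn3 : (0:ℝ) < (n:ℝ)^3 := by positivity
    have e1 : (1 - d1/(n:ℝ)) = ((n:ℝ) - d1)/(n:ℝ) := by field_simp
    have e2 : (1 + d2/(n:ℝ)) = ((n:ℝ) + d2)/(n:ℝ) := by field_simp
    rw [e1, e2, div_pow, div_pow, div_mul_eq_mul_div, div_mul_eq_mul_div]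
    exact div_le_div_of_nonneg_right h1' hn3.le |>.trans_eq rfl
  have h0 : Tendsto (fun n : ℕ => d1/(n:ℝ)) atTop (nhds 0) :=
    tendsto_const_div_atTop_nhds_zero_nat d1
  have h0' : Tendsto (fun n : ℕ => d2/(n:ℝ)) atTop (nhds 0) :=
    tendsto_const_div_atTop_nhds_zero_nat d2
  have hU : Tendsto (fun n : ℕ => (1 - d1/(n:ℝ))^3 * a') atTop (nhds a') := by
    have h2 : Tendsto (fun n : ℕ => 1 - d1/(n:ℝ)) atTop (nhds 1) := by
      simpa using tendsto_const_nhds.sub h0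
    simpa using (h2.pow 3).mul_const a'
  have hV : Tendsto (fun n : ℕ => (1 + d2/(n:ℝ))^3 * b') atTop (nhds b') := by
    have h2 : Tendsto (fun n : ℕ => 1 + d2/(n:ℝ)) atTop (nhds 1) := by
      simpa using tendsto_const_nhds.add h0'
    simpa using (h2.pow 3).mul_const b'
  refine le_of_tendsto_of_tendsto hU hV ?_
  filter_upwards [eventually_ge_atTop (⌈d1⌉₊ + 1)] with n hn
  have h1 : (1:ℝ) ≤ n := by exact_mod_cast Nat.one_le_iff_ne_zero.2 (by omega)
  have h2 : d1 ≤ (n:ℝ) := le_trans (Nat.le_ceil d1)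
    (by exact_mod_cast Nat.le_of_lt (by omega))
  exact key n h1 h2

lemma vol_ratio_le (S D1 Λ1 D2 Λ2 : Set E3) (hS : MeasurableSet S)
    (hD1 : MeasurableSet D1) (hD2 : MeasurableSet D2)
    (hΛ1 : Λ1.Countable) (hΛ2 : Λ2.Countable)
    (htile1 : ∀ x : E3, ∃! v, v ∈ Λ1 ∧ v + x ∈ D1)
    (htile2 : ∀ x : E3, ∃! v, v ∈ Λ2 ∧ v + x ∈ D2)
    (hper1 : ∀ v ∈ Λ1, ∀ x : E3, x ∈ S ↔ v + x ∈ S)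
    (hper2 : ∀ v ∈ Λ2, ∀ x : E3, x ∈ S ↔ v + x ∈ S)
    (d1 d2 : ℝ) (hd1 : 0 ≤ d1) (hd2 : 0 ≤ d2)
    (hb1 : ∀ x ∈ D1, ∀ y ∈ D1, dist x y ≤ d1)
    (hb2 : ∀ x ∈ D2, ∀ y ∈ D2, dist x y ≤ d2)
    (hD1fin : volume D1 ≠ ⊤) (hD2fin : volume D2 ≠ ⊤) :
    volume (S ∩ D1) * volume D2 ≤ volume (S ∩ D2) * volume D1 := by
  have hI1fin : volume (S ∩ D1) ≠ ⊤ :=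
    (lt_of_le_of_lt (measure_mono inter_subset_right) hD1fin.lt_top).ne
  have hI2fin : volume (S ∩ D2) ≠ ⊤ :=
    (lt_of_le_of_lt (measure_mono inter_subset_right) hD2fin.lt_top).ne
  set c := volume (ball (0:E3) 1) with hc
  have hc0 : c ≠ 0 := (measure_ball_pos volume 0 one_pos).ne'
  have hct : c ≠ ⊤ := measure_ball_lt_top.ne
  refine key_le _ _ (ENNReal.mul_ne_top hI1fin hD2fin) (ENNReal.mul_ne_top hI2fin hD1fin)
    d1 d2 hd1 hd2 ?_
  intro R hR
  have h1 := (sandwich S D1 Λ1 hS hD1 hΛ1 htile1 hper1 d1 hb1 R).1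
  have h2 := (sandwich S D2 Λ2 hS hD2 hΛ2 htile2 hper2 d2 hb2 R).2
  have comb : volume (closedBall (0:E3) (R - d1)) * (volume (S ∩ D1) * volume D2)
      ≤ volume (closedBall (0:E3) (R + d2)) * (volume (S ∩ D2) * volume D1) := by
    calc volume (closedBall (0:E3) (R - d1)) * (volume (S ∩ D1) * volume D2)
        = (volume (closedBall (0:E3) (R - d1)) * volume (S ∩ D1)) * volume D2 := by ring
      _ ≤ (volume D1 * volume (S ∩ closedBall 0 R)) * volume D2 :=
          mul_le_mul_left h1 _
      _ = (volume D2 * volume (S ∩ closedBall 0 R)) * volume D1 := by ring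
      _ ≤ (volume (closedBall (0:E3) (R + d2)) * volume (S ∩ D2)) * volume D1 :=
          mul_le_mul_left h2 _
      _ = _ := by ring
  have hfr : Module.finrank ℝ E3 = 3 := finrank_euclideanSpace_fin
  rw [Measure.addHaar_closedBall volume 0 (by linarith : (0:ℝ) ≤ R - d1),
    Measure.addHaar_closedBall volume 0 (by linarith : (0:ℝ) ≤ R + d2), hfr, ← hc] at comb
  have comb2 : (ENNReal.ofReal ((R - d1)^3) * (volume (S ∩ D1) * volume D2)) * c
      ≤ (ENNReal.ofReal ((R + d2)^3) * (volume (S ∩ D2) * volume D1)) * c := by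
    calc (ENNReal.ofReal ((R - d1)^3) * (volume (S ∩ D1) * volume D2)) * c
        = ENNReal.ofReal ((R - d1)^3) * c * (volume (S ∩ D1) * volume D2) := by ring
      _ ≤ ENNReal.ofReal ((R + d2)^3) * c * (volume (S ∩ D2) * volume D1) := comb
      _ = _ := by ring
  exact (ENNReal.mul_le_mul_iff_left hc0 hct).1 comb2

lemma cover_per (A : Set E3) (v : E3) (hAv : ∀ a, a ∈ A ↔ v + a ∈ A) (t : ℝ) (k : ℕ)
    (x : E3) : x ∈ coverGE A t k ↔ v + x ∈ coverGE A t k := by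
  classical
  constructor
  · rintro ⟨F, hcard, hFA, hFd⟩
    refine ⟨F.image (fun a => v + a), ?_, ?_, ?_⟩
    · rw [Finset.card_image_of_injective _ (add_right_injective v), hcard]
    · intro a ha
      simp only [Finset.coe_image, Set.mem_image] at ha
      obtain ⟨a0, ha0, rfl⟩ := ha
      exact (hAv a0).1 (hFA ha0)
    · intro a ha
      obtain ⟨a0, ha0, rfl⟩ := Finset.mem_image.1 ha
      rw [dist_add_left]
      exact hFd a0 ha0
  · rintro ⟨F, hcard, hFA, hFd⟩
    refine ⟨F.image (fun a => -v + a), ?_, ?_, ?_⟩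
    · rw [Finset.card_image_of_injective _ (add_right_injective (-v)), hcard]
    · intro a ha
      simp only [Finset.coe_image, Set.mem_image] at ha
      obtain ⟨a0, ha0, rfl⟩ := ha
      refine (hAv (-v + a0)).2 ?_
      rw [add_neg_cancel_left]
      exact hFA ha0
    · intro a ha
      obtain ⟨a0, ha0, rfl⟩ := Finset.mem_image.1 ha
      have : dist x (-v + a0) = dist (v + x) (v + (-v + a0)) := (dist_add_left v x _).symm
      rw [this, add_neg_cancel_left]
      exact hFd a0 ha0

lemma cover_iso (A : Set E3) (φ : E3 ≃ᵢ E3) (t : ℝ) (k : ℕ) (x : E3) :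
    x ∈ coverGE A t k ↔ φ x ∈ coverGE (φ '' A) t k := by
  classical
  constructor
  · rintro ⟨F, hcard, hFA, hFd⟩
    refine ⟨F.image φ, ?_, ?_, ?_⟩
    · rw [Finset.card_image_of_injective _ φ.injective, hcard]
    · intro a ha
      simp only [Finset.coe_image, Set.mem_image] at ha
      obtain ⟨a0, ha0, rfl⟩ := ha
      exact ⟨a0, hFA ha0, rfl⟩
    · intro a ha
      obtain ⟨a0, ha0, rfl⟩ := Finset.mem_image.1 ha
      rw [φ.dist_eq]
      exact hFd a0 ha0
  · rintro ⟨F, hcard, hFA, hFd⟩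
    refine ⟨F.image φ.symm, ?_, ?_, ?_⟩
    · rw [Finset.card_image_of_injective _ φ.symm.injective, hcard]
    · intro a ha
      simp only [Finset.coe_image, Set.mem_image] at ha
      obtain ⟨a0, ha0, rfl⟩ := ha
      obtain ⟨a1, ha1, rfl⟩ := hFA ha0
      simpa using ha1
    · intro a ha
      obtain ⟨a0, ha0, rfl⟩ := Finset.mem_image.1 ha
      have : dist x (φ.symm a0) = dist (φ x) (φ (φ.symm a0)) := (φ.dist_eq x _).symm
      rw [this, φ.apply_symm_apply]
      exact hFd a0 ha0

lemma cover_meas (A : Set E3) (hA : A.Countable) (t : ℝ) (k : ℕ) :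
    MeasurableSet (coverGE A t k) := by
  have heq : coverGE A t k
      = ⋃ F ∈ {F : Finset E3 | ↑F ⊆ A ∧ F.card = k}, ⋂ a ∈ F, closedBall a t := by
    ext x
    simp only [coverGE, mem_setOf_eq, mem_iUnion, mem_iInter, mem_closedBall]
    constructor
    · rintro ⟨F, h1, h2, h3⟩; exact ⟨F, ⟨h2, h1⟩, h3⟩
    · rintro ⟨F, ⟨h2, h1⟩, h3⟩; exact ⟨F, h1, h2, h3⟩
  have hc : {F : Finset E3 | ↑F ⊆ A ∧ F.card = k}.Countable := by
    have hsub : {F : Finset E3 | ↑F ⊆ A ∧ F.card = k} ⊆ {F : Finset E3 | ↑F ⊆ A} :=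
      fun F hF => hF.1
    refine Set.Countable.mono hsub ?_
    have heq2 : {F : Finset E3 | ↑F ⊆ A}
        = (fun F : Finset E3 => (F : Set E3)) ⁻¹' {s | s.Finite ∧ s ⊆ A} := by
      ext F; simp [Finset.finite_toSet]
    rw [heq2]
    exact (Set.countable_setOf_finite_subset hA).preimage Finset.coe_injective
  rw [heq]
  exact MeasurableSet.biUnion hc fun F _ =>
    MeasurableSet.biInter F.countable_toSet fun a _ => measurableSet_closedBall

lemma iso_vol (ψ : E3 ≃ᵢ E3) (T : Set E3) (hT : MeasurableSet T) :
    volume (ψ ⁻¹' T) = volume T := by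
  set L := ψ.toRealLinearIsometryEquiv with hL
  have hfun : ∀ x, ψ x = L x + ψ 0 := fun x => by
    rw [hL, IsometryEquiv.toRealLinearIsometryEquiv_apply, sub_add_cancel]
  have hpre : ψ ⁻¹' T = ⇑L ⁻¹' ((fun y => y + ψ 0) ⁻¹' T) := by
    ext x; simp [hfun x]
  rw [hpre, L.measurePreserving.measure_preimage
    ((hT.preimage (measurable_add_const _)).nullMeasurableSet),
    measure_preimage_add_right]

theorem fractional_cover_isometry_invariant (bA bQ : Fin 3 → E3)
    (hbA : LinearIndependent ℝ bA) (hbQ : LinearIndependent ℝ bQ)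
    (MA MQ : Finset E3) (hMA : ↑MA ⊆ cell bA) (hMQ : ↑MQ ⊆ cell bQ)
    (A Q : Set E3) (hA : A = ↑MA + lat bA) (hQ : Q = ↑MQ + lat bQ)
    (φ : E3 ≃ᵢ E3) (hφ : Q = φ '' A) (k : ℕ) (t : ℝ) :
    volume (cell bQ ∩ coverGE Q t k) / volume (cell bQ) =
      volume (cell bA ∩ coverGE A t k) / volume (cell bA) := by
  classical
  set SA := coverGE A t k with hSAdef
  set SQ := coverGE Q t k with hSQdef
  have hAc : A.Countable := by rw [hA]; exact A_countable MA bA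
  have hQc : Q.Countable := by rw [hQ]; exact A_countable MQ bQ
  have hSAm : MeasurableSet SA := cover_meas A hAc t k
  have hSQm : MeasurableSet SQ := cover_meas Q hQc t k
  have hD1m := cell_measurable bA hbA
  obtain ⟨C1, hC1⟩ := isBounded_iff.1 (cell_bounded bA hbA)
  set d1 := max C1 0 with hd1def
  have hb1 : ∀ x ∈ cell bA, ∀ y ∈ cell bA, dist x y ≤ d1 :=
    fun x hx y hy => (hC1 hx hy).trans (le_max_left _ _)
  have hd1 : 0 ≤ d1 := le_max_right _ _
  have htile1 := lat_tiling bA hbA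
  have hper1 : ∀ v ∈ lat bA, ∀ x : E3, x ∈ SA ↔ v + x ∈ SA := by
    intro v hv x
    apply cover_per
    intro a
    rw [hA]
    exact A_per MA bA hbA hv a
  set L := φ.toRealLinearIsometryEquiv with hLdef
  have hfun : ∀ x, φ x = L x + φ 0 := fun x => by
    rw [hLdef, IsometryEquiv.toRealLinearIsometryEquiv_apply, sub_add_cancel]
  have hkey : ∀ v x : E3, φ (v + x) = L v + φ x := by
    intro v x; rw [hfun (v + x), hfun x, map_add]; abel
  have hSAQ : ∀ x : E3, x ∈ SA ↔ φ x ∈ SQ := by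
    intro x
    have h1 : φ x ∈ coverGE (φ '' A) t k ↔ φ x ∈ SQ := by rw [hSQdef, hφ]
    exact (cover_iso A φ t k x).trans h1
  set D2 := φ ⁻¹' (cell bQ) with hD2def
  set Λ2 := ⇑L ⁻¹' (lat bQ) with hΛ2def
  have hD2m : MeasurableSet D2 := (cell_measurable bQ hbQ).preimage φ.continuous.measurable
  have hΛ2c : Λ2.Countable := (lat_countable bQ).preimage L.injective
  have hperQ : ∀ w ∈ lat bQ, ∀ y : E3, y ∈ SQ ↔ w + y ∈ SQ := by
    intro w hw y
    apply cover_per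
    intro a
    rw [hQ]
    exact A_per MQ bQ hbQ hw a
  have htile2 : ∀ x : E3, ∃! v, v ∈ Λ2 ∧ v + x ∈ D2 := by
    intro x
    obtain ⟨w, ⟨hw1, hw2⟩, huniq⟩ := lat_tiling bQ hbQ (φ x)
    refine ⟨L.symm w, ⟨?_, ?_⟩, ?_⟩
    · show L (L.symm w) ∈ lat bQ
      rw [L.apply_symm_apply]; exact hw1
    · show φ (L.symm w + x) ∈ cell bQ
      rw [hkey, L.apply_symm_apply]; exact hw2
    · rintro v ⟨hv1, hv2⟩
      have h3 : L v = w := huniq (L v) ⟨hv1, by rw [← hkey]; exact hv2⟩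
      rw [← h3, L.symm_apply_apply]
  have hper2 : ∀ v ∈ Λ2, ∀ x : E3, x ∈ SA ↔ v + x ∈ SA := by
    intro v hv x
    rw [hSAQ x, hSAQ (v + x), hkey]
    exact hperQ (L v) hv (φ x)
  obtain ⟨C2, hC2⟩ := isBounded_iff.1 (cell_bounded bQ hbQ)
  set d2 := max C2 0 with hd2def
  have hd2 : 0 ≤ d2 := le_max_right _ _
  have hb2 : ∀ x ∈ D2, ∀ y ∈ D2, dist x y ≤ d2 := by
    intro x hx y hy
    have h4 : dist x y = dist (φ x) (φ y) := (φ.dist_eq x y).symm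
    rw [h4]
    exact (hC2 hx hy).trans (le_max_left _ _)
  have hvolD2 : volume D2 = volume (cell bQ) := iso_vol φ _ (cell_measurable bQ hbQ)
  have hSAD2 : SA ∩ D2 = φ ⁻¹' (SQ ∩ cell bQ) := by
    ext x
    simp only [mem_inter_iff, mem_preimage, hD2def]
    exact and_congr_left fun _ => hSAQ x
  have hvolSAD2 : volume (SA ∩ D2) = volume (SQ ∩ cell bQ) := by
    rw [hSAD2]
    exact iso_vol φ _ (hSQm.inter (cell_measurable bQ hbQ))
  have hD1fin := cell_vol_ne_top bA hbA
  have hD2fin : volume D2 ≠ ⊤ := by rw [hvolD2]; exact cell_vol_ne_top bQ hbQ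
  have h1 := vol_ratio_le SA (cell bA) (lat bA) D2 Λ2 hSAm hD1m hD2m
    (lat_countable bA) hΛ2c htile1 htile2 hper1 hper2 d1 d2 hd1 hd2 hb1 hb2 hD1fin hD2fin
  have h2 := vol_ratio_le SA D2 Λ2 (cell bA) (lat bA) hSAm hD2m hD1m
    hΛ2c (lat_countable bA) htile2 htile1 hper2 hper1 d2 d1 hd2 hd1 hb2 hb1 hD2fin hD1fin
  have heq : volume (SA ∩ cell bA) * volume (cell bQ)
      = volume (SQ ∩ cell bQ) * volume (cell bA) := by
    rw [← hvolD2, ← hvolSAD2]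
    exact le_antisymm h1 h2
  rw [inter_comm (cell bQ), inter_comm (cell bA)]
  rw [ENNReal.div_eq_div_iff (cell_vol_ne_zero bA hbA) (cell_vol_ne_top bA hbA)
    (cell_vol_ne_zero bQ hbQ) (cell_vol_ne_top bQ hbQ)]
  rw [mul_comm (volume (cell bA)), mul_comm (volume (cell bQ))]
  exact heq.symm
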